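/- Let ρ be a density operator on ℍ, σ a positive definite density operator, X a self-adjoint operator, and λ > 0. Then tr(ρX) ≤ (1/λ)·D(ρ‖σ) + (1/λ)·log tr(exp(log σ + λX)), where D(ρ‖σ) = tr(ρ(log ρ − log σ)) is the Umegaki relative entropy. -/

import Mathlib

open Matrix
open scoped ComplexOrder

/-- Matrix logarithm via the continuous functional calculus (with `Real.log 0 = 0`,
implementing the convention `0·log 0 = 0` on the kernel). -/
noncomputable def mlog {n : ℕ} (M : Matrix (Fin n) (Fin n) ℂ) : Matrix (Fin n) (Fin n) ℂ :=
  cfc Real.log M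

/-- Matrix exponential of a Hermitian matrix via the continuous functional calculus. -/
noncomputable def mexp {n : ℕ} (M : Matrix (Fin n) (Fin n) ℂ) : Matrix (Fin n) (Fin n) ℂ :=
  cfc Real.exp M

/-- Umegaki relative entropy `D(ρ‖σ) = tr(ρ(log ρ − log σ))`. -/
noncomputable def relEnt {n : ℕ} (ρ σ : Matrix (Fin n) (Fin n) ℂ) : ℝ :=
  ((ρ * (mlog ρ - mlog σ)).trace).re

section aux

variable {n : ℕ}

/-! ### Scalar inequalities -/

lemma per_term_aux {p r Z : ℝ} (hp : 0 ≤ p) (hr : 0 < r) (hZ : 0 < Z) :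
    p * Real.log r - p * Real.log p - p * Real.log Z ≤ r / Z - p := by
  rcases eq_or_lt_of_le hp with h | hp
  · simp [← h]; positivity
  · have key : Real.log (r / (p * Z)) ≤ r / (p * Z) - 1 :=
      Real.log_le_sub_one_of_pos (by positivity)
    have hlog : Real.log (r / (p * Z)) = Real.log r - Real.log p - Real.log Z := by
      rw [Real.log_div hr.ne' (by positivity), Real.log_mul hp.ne' hZ.ne', sub_sub]
    have := mul_le_mul_of_nonneg_left key hp.le
    rw [hlog] at this
    have h2 : p * (r / (p * Z) - 1) = r / Z - p := by
      field_simp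
    nlinarith [this]

open Finset in
lemma scalar_gibbs {n : ℕ} (p h : Fin n → ℝ) (c : Fin n → Fin n → ℝ)
    (hp : ∀ i, 0 ≤ p i) (hps : ∑ i, p i = 1)
    (hc : ∀ i j, 0 ≤ c i j) (hrow : ∀ i, ∑ j, c i j = 1) (hcol : ∀ j, ∑ i, c i j = 1) :
    ∑ i, ∑ j, p i * h j * c i j ≤
      ∑ i, p i * Real.log (p i) + Real.log (∑ j, Real.exp (h j)) := by
  rcases Nat.eq_zero_or_pos n with hn | hn
  · subst hn; simp at hps
  set r : Fin n → ℝ := fun i => ∑ j, c i j * Real.exp (h j) with hr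
  set Z : ℝ := ∑ j, Real.exp (h j) with hZ
  have hZpos : 0 < Z :=
    Finset.sum_pos (fun j _ => Real.exp_pos _) ⟨⟨0, hn⟩, mem_univ _⟩
  have hjensen : ∀ i, Real.exp (∑ j, c i j * h j) ≤ r i := by
    intro i
    have := convexOn_exp.map_sum_le (t := univ) (w := c i) (p := h)
      (fun j _ => hc i j) (hrow i) (fun j _ => Set.mem_univ _)
    simpa [smul_eq_mul] using this
  have hrpos : ∀ i, 0 < r i := fun i => lt_of_lt_of_le (Real.exp_pos _) (hjensen i)
  have hslog : ∀ i, ∑ j, c i j * h j ≤ Real.log (r i) := by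
    intro i
    rw [← Real.log_exp (∑ j, c i j * h j)]
    exact Real.log_le_log (Real.exp_pos _) (hjensen i)
  have hrsum : ∑ i, r i = Z := by
    rw [hr, Finset.sum_comm]
    simp only [← Finset.sum_mul, hcol, one_mul, hZ]
  have step1 : ∑ i, ∑ j, p i * h j * c i j ≤ ∑ i, p i * Real.log (r i) := by
    apply Finset.sum_le_sum
    intro i _
    have : ∑ j, p i * h j * c i j = p i * ∑ j, c i j * h j := by
      rw [Finset.mul_sum]; congr 1; ext j; ring
    rw [this]
    exact mul_le_mul_of_nonneg_left (hslog i) (hp i)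
  have step2 : ∑ i, p i * Real.log (r i) ≤ ∑ i, p i * Real.log (p i) + Real.log Z := by
    have key : ∑ i, (p i * Real.log (r i) - p i * Real.log (p i) - p i * Real.log Z)
        ≤ ∑ i, (r i / Z - p i) :=
      Finset.sum_le_sum fun i _ => per_term_aux (hp i) (hrpos i) hZpos
    have hRHS : ∑ i, (r i / Z - p i) = 0 := by
      rw [Finset.sum_sub_distrib, ← Finset.sum_div, hrsum, div_self hZpos.ne', hps, sub_self]
    rw [hRHS] at key
    have hsplit : ∑ i, (p i * Real.log (r i) - p i * Real.log (p i) - p i * Real.log Z)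
        = ∑ i, p i * Real.log (r i) - ∑ i, p i * Real.log (p i) - Real.log Z := by
      rw [Finset.sum_sub_distrib, Finset.sum_sub_distrib, ← Finset.sum_mul, hps, one_mul]
    linarith [hsplit ▸ key]
  linarith

/-! ### Matrix trace computations via the spectral theorem -/

lemma star_mul_self_unitary {A : Matrix (Fin n) (Fin n) ℂ} (hA : A.IsHermitian) :
    star (hA.eigenvectorUnitary : Matrix (Fin n) (Fin n) ℂ) *
      (hA.eigenvectorUnitary : Matrix (Fin n) (Fin n) ℂ) = 1 :=
  Matrix.mem_unitaryGroup_iff'.mp (hA.eigenvectorUnitary).2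

lemma trace_conj_diag {A : Matrix (Fin n) (Fin n) ℂ} (hA : A.IsHermitian)
    (d : Fin n → ℂ) :
    ((hA.eigenvectorUnitary : Matrix (Fin n) (Fin n) ℂ) * diagonal d *
      star (hA.eigenvectorUnitary : Matrix (Fin n) (Fin n) ℂ)).trace = ∑ i, d i := by
  rw [trace_mul_cycle, star_mul_self_unitary hA, one_mul, trace_diagonal]

lemma trace_cfc' {A : Matrix (Fin n) (Fin n) ℂ} (hA : A.IsHermitian) (f : ℝ → ℝ) :
    (cfc f A).trace = ↑(∑ i, f (hA.eigenvalues i)) := by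
  rw [hA.cfc_eq, Matrix.IsHermitian.cfc, Unitary.conjStarAlgAut_apply, trace_conj_diag hA]
  push_cast
  rfl

lemma trace_self_mul_cfc {A : Matrix (Fin n) (Fin n) ℂ} (hA : A.IsHermitian) (f : ℝ → ℝ) :
    (A * cfc f A).trace = ↑(∑ i, hA.eigenvalues i * f (hA.eigenvalues i)) := by
  rw [hA.cfc_eq, Matrix.IsHermitian.cfc, Unitary.conjStarAlgAut_apply]
  have hsp := hA.spectral_theorem
  rw [Unitary.conjStarAlgAut_apply] at hsp
  have hUU : star (hA.eigenvectorUnitary : Matrix (Fin n) (Fin n) ℂ) *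
      (hA.eigenvectorUnitary : Matrix (Fin n) (Fin n) ℂ) = 1 := star_mul_self_unitary hA
  have htr := trace_conj_diag hA
  set p : Fin n → ℝ := hA.eigenvalues with hpdef
  set U : Matrix (Fin n) (Fin n) ℂ := (hA.eigenvectorUnitary : Matrix (Fin n) (Fin n) ℂ) with hUdef
  clear_value U p
  rw [hsp]
  have : U * diagonal (RCLike.ofReal ∘ p) * star U *
      (U * diagonal (RCLike.ofReal ∘ f ∘ p) * star U)
      = U * (diagonal (RCLike.ofReal ∘ p) *
          diagonal (RCLike.ofReal ∘ f ∘ p)) * star U := by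
    calc _ = U * diagonal (RCLike.ofReal ∘ p) * (star U * U) *
        diagonal (RCLike.ofReal ∘ f ∘ p) * star U := by
          simp only [mul_assoc]
    _ = _ := by rw [hUU, mul_one]; simp only [mul_assoc]
  rw [this, diagonal_mul_diagonal, htr]
  push_cast
  rfl

lemma trace_unitary_conj (U M : Matrix (Fin n) (Fin n) ℂ) (hU : star U * U = 1) :
    (U * M * star U).trace = M.trace := by
  rw [trace_mul_cycle, hU, one_mul]

lemma trace_two_hermitian {A B : Matrix (Fin n) (Fin n) ℂ}
    (hA : A.IsHermitian) (hB : B.IsHermitian) :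
    ((A * B).trace) = ↑(∑ i, ∑ j, hA.eigenvalues i * hB.eigenvalues j *
      Complex.normSq ((star (hA.eigenvectorUnitary : Matrix (Fin n) (Fin n) ℂ) *
        (hB.eigenvectorUnitary : Matrix (Fin n) (Fin n) ℂ)) i j)) := by
  have hspA := hA.spectral_theorem
  have hspB := hB.spectral_theorem
  rw [Unitary.conjStarAlgAut_apply] at hspA hspB
  have hUU : star (hA.eigenvectorUnitary : Matrix (Fin n) (Fin n) ℂ) * _ = 1 :=
    Matrix.mem_unitaryGroup_iff'.mp (hA.eigenvectorUnitary).2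
  have hUU' : (hA.eigenvectorUnitary : Matrix (Fin n) (Fin n) ℂ) * star _ = 1 :=
    Matrix.mem_unitaryGroup_iff.mp (hA.eigenvectorUnitary).2
  have hVV : (hB.eigenvectorUnitary : Matrix (Fin n) (Fin n) ℂ) * star _ = 1 :=
    Matrix.mem_unitaryGroup_iff.mp (hB.eigenvectorUnitary).2
  set p : Fin n → ℝ := hA.eigenvalues
  set q : Fin n → ℝ := hB.eigenvalues
  set U : Matrix (Fin n) (Fin n) ℂ := (hA.eigenvectorUnitary : Matrix (Fin n) (Fin n) ℂ)
  set V : Matrix (Fin n) (Fin n) ℂ := (hB.eigenvectorUnitary : Matrix (Fin n) (Fin n) ℂ)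
  clear_value p q U V
  rw [hspA, hspB]
  set W : Matrix (Fin n) (Fin n) ℂ := star U * V with hW
  have key : U * diagonal (RCLike.ofReal ∘ p) * star U *
        (V * diagonal (RCLike.ofReal ∘ q) * star V)
      = U * (diagonal (RCLike.ofReal ∘ p) *
          (W * diagonal (RCLike.ofReal ∘ q) * star W)) * star U := by
    rw [hW, Matrix.star_mul, star_star]
    simp only [mul_assoc, hUU', mul_one]
  rw [key, trace_unitary_conj _ _ hUU]
  rw [Matrix.trace]
  push_cast
  refine Finset.sum_congr rfl fun i _ => ?_
  rw [Matrix.diag_apply, Matrix.diagonal_mul, Matrix.mul_apply, Finset.mul_sum]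
  refine Finset.sum_congr rfl fun j _ => ?_
  rw [Matrix.mul_diagonal]
  simp only [Matrix.star_apply, Function.comp_apply, RCLike.ofReal_real_eq_id, id_eq]
  rw [RCLike.star_def, mul_right_comm, Complex.mul_conj]
  push_cast
  simp only [show ((RCLike.ofReal : ℝ → ℂ)) = Complex.ofReal from rfl]
  ring

lemma row_sum_normSq (W : Matrix (Fin n) (Fin n) ℂ) (h : W * star W = 1) (i : Fin n) :
    ∑ j, Complex.normSq (W i j) = 1 := by
  have h2 := Matrix.ext_iff.mpr h i i
  simp only [Matrix.mul_apply, Matrix.star_apply, Matrix.one_apply_eq] at h2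
  apply Complex.ofReal_injective
  push_cast
  rw [← h2]
  refine Finset.sum_congr rfl fun j _ => ?_
  rw [RCLike.star_def, Complex.mul_conj]

lemma col_sum_normSq (W : Matrix (Fin n) (Fin n) ℂ) (h : star W * W = 1) (j : Fin n) :
    ∑ i, Complex.normSq (W i j) = 1 := by
  have := row_sum_normSq (star W) (by rwa [star_star]) j
  simp only [Matrix.star_apply] at this
  rw [← this]
  exact Finset.sum_congr rfl fun i _ => by rw [← Complex.normSq_conj]; rfl

/-! ### Klein's inequality / Gibbs variational bound -/

lemma matrix_gibbs (ρ H : Matrix (Fin n) (Fin n) ℂ) (hρ : ρ.PosSemidef)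
    (hρtr : ρ.trace = 1) (hH : H.IsHermitian) :
    ((ρ * H).trace).re ≤ ((ρ * mlog ρ).trace).re + Real.log (((mexp H).trace).re) := by
  have hρh : ρ.IsHermitian := hρ.1
  have hUU : star (hρh.eigenvectorUnitary : Matrix (Fin n) (Fin n) ℂ) * _ = 1 :=
    Matrix.mem_unitaryGroup_iff'.mp (hρh.eigenvectorUnitary).2
  have hUU' : (hρh.eigenvectorUnitary : Matrix (Fin n) (Fin n) ℂ) * star _ = 1 :=
    Matrix.mem_unitaryGroup_iff.mp (hρh.eigenvectorUnitary).2
  have hVV : star (hH.eigenvectorUnitary : Matrix (Fin n) (Fin n) ℂ) * _ = 1 :=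
    Matrix.mem_unitaryGroup_iff'.mp (hH.eigenvectorUnitary).2
  have hVV' : (hH.eigenvectorUnitary : Matrix (Fin n) (Fin n) ℂ) * star _ = 1 :=
    Matrix.mem_unitaryGroup_iff.mp (hH.eigenvectorUnitary).2
  set U : Matrix (Fin n) (Fin n) ℂ := (hρh.eigenvectorUnitary : Matrix (Fin n) (Fin n) ℂ)
  set V : Matrix (Fin n) (Fin n) ℂ := (hH.eigenvectorUnitary : Matrix (Fin n) (Fin n) ℂ)
  set W : Matrix (Fin n) (Fin n) ℂ := star U * V with hWdef
  have hW1 : W * star W = 1 := by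
    rw [hWdef, Matrix.star_mul, star_star]
    calc star U * V * (star V * U) = star U * (V * star V) * U := by simp only [mul_assoc]
    _ = 1 := by rw [hVV', mul_one, hUU]
  have hW2 : star W * W = 1 := by
    rw [hWdef, Matrix.star_mul, star_star]
    calc star V * U * (star U * V) = star V * (U * star U) * V := by simp only [mul_assoc]
    _ = 1 := by rw [hUU', mul_one, hVV]
  -- eigenvalue sums
  have hpsum : ∑ i, hρh.eigenvalues i = 1 := by
    have h1 : (cfc (id : ℝ → ℝ) ρ).trace = ↑(∑ i, id (hρh.eigenvalues i)) := trace_cfc' hρh id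
    rw [cfc_id ℝ ρ] at h1
    rw [hρtr] at h1
    exact_mod_cast h1.symm
  have h1 : ((ρ * H).trace).re = ∑ i, ∑ j,
      hρh.eigenvalues i * hH.eigenvalues j * Complex.normSq (W i j) := by
    rw [trace_two_hermitian hρh hH]
    exact Complex.ofReal_re _
  have h2 : ((ρ * mlog ρ).trace).re = ∑ i, hρh.eigenvalues i * Real.log (hρh.eigenvalues i) := by
    rw [mlog, trace_self_mul_cfc hρh]
    exact Complex.ofReal_re _
  have h3 : ((mexp H).trace).re = ∑ j, Real.exp (hH.eigenvalues j) := by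
    rw [mexp, trace_cfc' hH]
    exact Complex.ofReal_re _
  rw [h1, h2, h3]
  exact scalar_gibbs hρh.eigenvalues hH.eigenvalues
    (fun i j => Complex.normSq (W i j))
    hρ.eigenvalues_nonneg hpsum
    (fun i j => Complex.normSq_nonneg _)
    (row_sum_normSq W hW1) (col_sum_normSq W hW2)

end aux

/-- Variational formula: `tr(ρX) ≤ (1/λ)D(ρ‖σ) + (1/λ) log tr(exp(log σ + λX))`. -/
theorem variational_formula {n : ℕ} (ρ σ X : Matrix (Fin n) (Fin n) ℂ)
    (hρ : ρ.PosSemidef) (hρtr : ρ.trace = 1)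
    (hσ : σ.PosDef) (hσtr : σ.trace = 1)
    (hX : X.IsHermitian) (l : ℝ) (hl : 0 < l) :
    ((ρ * X).trace).re ≤
      (1 / l) * relEnt ρ σ +
        (1 / l) * Real.log (((mexp (mlog σ + (l : ℂ) • X)).trace).re) := by
  set H : Matrix (Fin n) (Fin n) ℂ := mlog σ + (l : ℂ) • X with hHdef
  have hlogσ : (mlog σ).IsHermitian := by
    have h : IsSelfAdjoint (cfc Real.log σ) := cfc_predicate Real.log σ
    exact h
  have hlX : ((l : ℂ) • X).IsHermitian := by
    unfold Matrix.IsHermitian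
    rw [Matrix.conjTranspose_smul, hX.eq, RCLike.star_def, Complex.conj_ofReal]
  have hH : H.IsHermitian := hlogσ.add hlX
  have hg := matrix_gibbs ρ H hρ hρtr hH
  have hexpand : ((ρ * H).trace).re
      = ((ρ * mlog σ).trace).re + l * ((ρ * X).trace).re := by
    rw [hHdef, mul_add, Matrix.mul_smul, trace_add, trace_smul, Complex.add_re,
      smul_eq_mul, Complex.re_ofReal_mul]
  have hrel : relEnt ρ σ = ((ρ * mlog ρ).trace).re - ((ρ * mlog σ).trace).re := by
    rw [relEnt, mul_sub, trace_sub, Complex.sub_re]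
  have key : l * ((ρ * X).trace).re ≤
      relEnt ρ σ + Real.log (((mexp H).trace).re) := by
    rw [hrel]; linarith [hg, hexpand]
  have hll : (0:ℝ) < 1 / l := by positivity
  calc ((ρ * X).trace).re = (1 / l) * (l * ((ρ * X).trace).re) := by
        field_simp
  _ ≤ (1 / l) * (relEnt ρ σ + Real.log (((mexp H).trace).re)) :=
        mul_le_mul_of_nonneg_left key hll.le
  _ = _ := by rw [mul_add]
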